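/- arXiv:1006.4804 — 3 statements merged into one kernel-verified Lean document; each statement's English description precedes it below -/
import Mathlib

section
/- Let n ≥ 1 and let X : ℝ → Matrix (Fin n) (Fin n) ℝ be continuous on [0, b] with all entries bounded by M > 0 on [0, b]. Define E_0(x) = 1 and E_{k+1}(x) = ∫_0^x X(t) · E_k(t) dt. Then for every x ∈ [0, b] the series ∑_{k=0}^∞ E_k(x) converges (is summable) in the space of n × n real matrices; i.e. the integral series ℰ(X)(x) is well-defined. -/
open MeasureTheory Matrix

/- Matrices are equipped with the elementwise sup norm. -/
attribute [local instance] Matrix.normedAddCommGroup Matrix.normedSpace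

/-- Terms of the left integral series: `E_0(x) = 1`, `E_{k+1}(x) = ∫_0^x X(t) * E_k(t) dt`. -/
noncomputable def lterm {ι : Type*} [Fintype ι] [DecidableEq ι]
    (X : ℝ → Matrix ι ι ℝ) : ℕ → ℝ → Matrix ι ι ℝ
  | 0, _ => 1
  | k + 1, x => ∫ t in (0:ℝ)..x, X t * lterm X k t

/-- The left integral series `ℰ(X)(x) = ∑_{k=0}^∞ E_k(x)`. -/
noncomputable def ES {ι : Type*} [Fintype ι] [DecidableEq ι]
    (X : ℝ → Matrix ι ι ℝ) (x : ℝ) : Matrix ι ι ℝ := ∑' k, lterm X k x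

/-- Terms of the right integral series: `F_0(x) = 1`, `F_{k+1}(x) = ∫_0^x F_k(t) * X(t) dt`. -/
noncomputable def rterm {ι : Type*} [Fintype ι] [DecidableEq ι]
    (X : ℝ → Matrix ι ι ℝ) : ℕ → ℝ → Matrix ι ι ℝ
  | 0, _ => 1
  | k + 1, x => ∫ t in (0:ℝ)..x, rterm X k t * X t

/-- The right integral series `ℱ(X)(x) = ∑_{k=0}^∞ F_k(x)`. -/
noncomputable def FS {ι : Type*} [Fintype ι] [DecidableEq ι]
    (X : ℝ → Matrix ι ι ℝ) (x : ℝ) : Matrix ι ι ℝ := ∑' k, rterm X k x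

lemma matrix_norm_one {n : ℕ} (hn : 1 ≤ n) : ‖(1 : Matrix (Fin n) (Fin n) ℝ)‖ ≤ 1 := by
  rw [Matrix.norm_le_iff zero_le_one]
  intro i j
  rw [Matrix.one_apply]
  split <;> simp

lemma matrix_norm_mul {n : ℕ} (A B : Matrix (Fin n) (Fin n) ℝ) :
    ‖A * B‖ ≤ n * ‖A‖ * ‖B‖ := by
  have h : (0:ℝ) ≤ n * ‖A‖ * ‖B‖ := by positivity
  rw [Matrix.norm_le_iff h]
  intro i j
  rw [Matrix.mul_apply]
  calc ‖∑ l, A i l * B l j‖ ≤ ∑ l, ‖A i l * B l j‖ := norm_sum_le _ _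
    _ ≤ ∑ _l : Fin n, ‖A‖ * ‖B‖ := by
        refine Finset.sum_le_sum fun l _ => ?_
        rw [norm_mul]
        exact mul_le_mul (Matrix.norm_entry_le_entrywise_sup_norm A)
          (Matrix.norm_entry_le_entrywise_sup_norm B) (norm_nonneg _) (norm_nonneg _)
    _ = n * ‖A‖ * ‖B‖ := by simp [mul_assoc]

/-- the left integral series `ℰ(X)(x)` converges (is summable). -/
theorem ES_summable {n : ℕ} (hn : 1 ≤ n) (b M : ℝ) (hM : 0 < M)
    (X : ℝ → Matrix (Fin n) (Fin n) ℝ)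
    (hX : ContinuousOn X (Set.Icc 0 b))
    (hbound : ∀ t ∈ Set.Icc (0:ℝ) b, ∀ i j, |X t i j| ≤ M) :
    ∀ x ∈ Set.Icc (0:ℝ) b, Summable (fun k => lterm X k x) := by
  intro x hx
  obtain ⟨hx0, hxb⟩ := hx
  have hb : (0:ℝ) ≤ b := le_trans hx0 hxb
  have huIcc : Set.uIcc (0:ℝ) b = Set.Icc 0 b := Set.uIcc_of_le hb
  have hXnorm : ∀ t ∈ Set.Icc (0:ℝ) b, ‖X t‖ ≤ M := fun t ht => by
    rw [Matrix.norm_le_iff hM.le]; intro i j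
    simpa [Real.norm_eq_abs] using hbound t ht i j
  -- main induction
  have key : ∀ k : ℕ, ContinuousOn (lterm X k) (Set.Icc 0 b) ∧
      ∀ s ∈ Set.Icc (0:ℝ) b, ‖lterm X k s‖ ≤ (n * M) ^ k * s ^ k / k.factorial := by
    intro k
    induction k with
    | zero =>
      refine ⟨continuousOn_const, fun s _ => ?_⟩
      simpa [lterm] using matrix_norm_one hn
    | succ k ih =>
      obtain ⟨ihc, ihb⟩ := ih
      have hcont : ContinuousOn (fun t => X t * lterm X k t) (Set.Icc 0 b) :=
        hX.mul ihc
      have hint : @IntegrableOn ℝ (Matrix (Fin n) (Fin n) ℝ) _ PseudoMetricSpace.toUniformSpace.toTopologicalSpace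
          SeminormedAddGroup.toContinuousENorm (fun t => X t * lterm X k t) (Set.uIcc 0 b) volume := by
        rw [huIcc]
        exact hcont.integrableOn_compact isCompact_Icc
      have hdef : lterm X (k+1) = fun x => ∫ t in (0:ℝ)..x, X t * lterm X k t := rfl
      constructor
      · rw [hdef, ← huIcc]
        exact intervalIntegral.continuousOn_primitive_interval hint
      · intro s hs
        obtain ⟨hs0, hsb⟩ := hs
        have hg : IntervalIntegrable
            (fun t => (n * M) * ((n * M) ^ k * t ^ k / k.factorial)) volume 0 s := by
          apply Continuous.intervalIntegrable; continuity
        have hb' : ∀ᵐ t ∂(volume.restrict (Set.uIoc (0:ℝ) s)),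
            ‖X t * lterm X k t‖ ≤ (n * M) * ((n * M) ^ k * t ^ k / k.factorial) := by
          refine (ae_restrict_iff' measurableSet_uIoc).2 (ae_of_all _ fun t ht => ?_)
          rw [Set.uIoc_of_le hs0] at ht
          have htb : t ∈ Set.Icc (0:ℝ) b := ⟨ht.1.le, le_trans ht.2 hsb⟩
          calc ‖X t * lterm X k t‖ ≤ n * ‖X t‖ * ‖lterm X k t‖ := matrix_norm_mul _ _
            _ ≤ n * M * ((n * M) ^ k * t ^ k / k.factorial) := by
                have h1 := hXnorm t htb
                have h2 := ihb t htb
                have hn0 : (0:ℝ) ≤ n := by positivity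
                have := mul_le_mul (mul_le_mul_of_nonneg_left h1 hn0) h2
                  (norm_nonneg _) (by positivity)
                linarith
            _ = (n * M) * ((n * M) ^ k * t ^ k / k.factorial) := by ring
        rw [hdef]
        calc ‖∫ t in (0:ℝ)..s, X t * lterm X k t‖
            ≤ |∫ t in (0:ℝ)..s, (n * M) * ((n * M) ^ k * t ^ k / k.factorial)| :=
              intervalIntegral.norm_integral_le_abs_of_norm_le hb' hg
          _ = (n * M) ^ (k+1) * s ^ (k+1) / (k+1).factorial := by
              have : ∫ t in (0:ℝ)..s, (n * M) * ((n * M) ^ k * t ^ k / k.factorial)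
                  = (n * M) * ((n * M) ^ k / k.factorial) * ((s ^ (k+1) - 0 ^ (k+1)) / (k+1)) := by
                rw [← integral_pow, ← intervalIntegral.integral_const_mul]
                congr 1; ext t; ring
              rw [this, zero_pow (Nat.succ_ne_zero k), sub_zero]
              have hk : (k.factorial : ℝ) ≠ 0 := Nat.cast_ne_zero.2 k.factorial_ne_zero
              have hk1 : ((k:ℝ) + 1) ≠ 0 := by positivity
              rw [abs_of_nonneg (by positivity), Nat.factorial_succ]
              push_cast
              field_simp
              ring
  -- comparison
  apply Summable.of_norm_bounded (g := fun k => (n * M * x) ^ k / k.factorial)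
  · exact Real.summable_pow_div_factorial _
  · intro k
    calc ‖lterm X k x‖ ≤ (n * M) ^ k * x ^ k / k.factorial := (key k).2 x ⟨hx0, hxb⟩
      _ = (n * M * x) ^ k / k.factorial := by rw [mul_pow, mul_pow]; ring
end

section
/- Let X : ℝ → Matrix (Fin n) (Fin n) ℝ be continuous on [0, b], and suppose that for every x ∈ [0, b] the matrices X(x) and ∫_0^x X(t) dt commute. Then for every x ∈ [0, b], ℰ(X)(x) = exp(∫_0^x X(t) dt) = ℱ(X)(x), where exp denotes the matrix exponential. -/
open MeasureTheory Matrix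

/- Matrices are equipped with the elementwise sup norm. -/
attribute [local instance] Matrix.normedAddCommGroup Matrix.normedSpace

/-- Matrix multiplication as a continuous bilinear map (finite dimensions). -/
noncomputable def mulCLM (n : ℕ) :
    Matrix (Fin n) (Fin n) ℝ →L[ℝ] Matrix (Fin n) (Fin n) ℝ →L[ℝ] Matrix (Fin n) (Fin n) ℝ :=
  LinearMap.toContinuousLinearMap
    { toFun := fun A => LinearMap.toContinuousLinearMap (LinearMap.mulLeft ℝ A)
      map_add' := by
        intro A B
        ext C
        simp [add_mul]
      map_smul' := by
        intro c A
        ext C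
        simp [smul_mul_assoc] }

lemma mulCLM_apply {n : ℕ} (A B : Matrix (Fin n) (Fin n) ℝ) : mulCLM n A B = A * B := rfl

/-- Product rule for matrix-valued functions of a real variable. -/
lemma matrix_hasDerivAt_mul {n : ℕ} {f g : ℝ → Matrix (Fin n) (Fin n) ℝ}
    {f' g' : Matrix (Fin n) (Fin n) ℝ} {x : ℝ}
    (hf : HasDerivAt f f' x) (hg : HasDerivAt g g' x) :
    HasDerivAt (fun t => f t * g t) (f' * g x + f x * g') x := by
  have key : ∀ i j, HasDerivAt (fun t => (f t * g t) i j) ((f' * g x + f x * g') i j) x := by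
    intro i j
    simp only [Matrix.mul_apply, Matrix.add_apply, ← Finset.sum_add_distrib]
    refine HasDerivAt.fun_sum fun k _ => ?_
    have hf' : HasDerivAt (fun t => f t i k) (f' i k) x := hasDerivAt_pi.1 (hasDerivAt_pi.1 hf i) k
    have hg' : HasDerivAt (fun t => g t k j) (g' k j) x := hasDerivAt_pi.1 (hasDerivAt_pi.1 hg k) j
    exact hf'.mul hg'
  exact hasDerivAt_pi.2 fun i => hasDerivAt_pi.2 fun j => key i j

/-- Derivative of a power of a function commuting with its derivative. -/
lemma matrix_hasDerivAt_pow_succ {n : ℕ} {A : ℝ → Matrix (Fin n) (Fin n) ℝ}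
    {a : Matrix (Fin n) (Fin n) ℝ} {x : ℝ} (hA : HasDerivAt A a x) (h : Commute a (A x)) :
    ∀ m : ℕ, HasDerivAt (fun t => A t ^ (m + 1)) (((m : ℝ) + 1) • (a * A x ^ m)) x := by
  intro m
  induction m with
  | zero => simpa using hA
  | succ m ih =>
      have hmul := matrix_hasDerivAt_mul hA ih
      have key : a * A x ^ (m + 1) + A x * (((m : ℝ) + 1) • (a * A x ^ m)) =
          (((m : ℝ) + 1) + 1) • (a * A x ^ (m + 1)) := by
        have h1 : A x * (a * A x ^ m) = a * A x ^ (m + 1) := by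
          rw [← mul_assoc, ← h.eq, mul_assoc, ← pow_succ']
        rw [mul_smul_comm, h1]
        module
      have hthis : HasDerivAt (fun t => A t * A t ^ (m + 1))
          ((((m : ℝ) + 1) + 1) • (a * A x ^ (m + 1))) x := by
        rw [← key]; exact hmul
      have heq : (fun t => A t * A t ^ (m + 1)) = fun t => A t ^ (m + 1 + 1) := by
        funext t; rw [← pow_succ']
      rw [heq] at hthis
      convert hthis using 2
      push_cast; ring

/-- when `X(x)` commutes with `∫_0^x X`, both integral series equal the
matrix exponential of `∫_0^x X(t) dt`. -/
theorem ES_FS_eq_exp {n : ℕ} (b : ℝ) (X : ℝ → Matrix (Fin n) (Fin n) ℝ)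
    (hX : ContinuousOn X (Set.Icc 0 b))
    (hcomm : ∀ x ∈ Set.Icc (0:ℝ) b, Commute (X x) (∫ t in (0:ℝ)..x, X t)) :
    ∀ x ∈ Set.Icc (0:ℝ) b,
      ES X x = NormedSpace.exp (∫ t in (0:ℝ)..x, X t) ∧
      FS X x = NormedSpace.exp (∫ t in (0:ℝ)..x, X t) := by
  rcases lt_or_ge b 0 with hb | hb
  · intro x hx
    exact absurd (hx.1.trans hx.2) (not_le.mpr hb)
  -- Extend `X` continuously to all of `ℝ`.
  set Y : ℝ → Matrix (Fin n) (Fin n) ℝ := fun t => X ((Set.projIcc 0 b hb t : ℝ)) with hYdef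
  have hY : Continuous Y :=
    hX.comp_continuous (continuous_subtype_val.comp continuous_projIcc)
      (fun t => Subtype.coe_prop _)
  have hYX : ∀ t ∈ Set.Icc (0:ℝ) b, Y t = X t := by
    intro t ht
    simp only [hYdef, Set.projIcc_of_mem hb ht]
  set A : ℝ → Matrix (Fin n) (Fin n) ℝ := fun x => ∫ t in (0:ℝ)..x, Y t with hAdef
  have hsub : ∀ x ∈ Set.Icc (0:ℝ) b, Set.uIcc (0:ℝ) x ⊆ Set.Icc 0 b := by
    intro x hx
    rw [Set.uIcc_of_le hx.1]
    exact Set.Icc_subset_Icc_right hx.2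
  have hAX : ∀ x ∈ Set.Icc (0:ℝ) b, A x = ∫ t in (0:ℝ)..x, X t := by
    intro x hx
    exact intervalIntegral.integral_congr (fun t ht => hYX t (hsub x hx ht))
  have hA : ∀ t, HasDerivAt A (Y t) t := fun t =>
    (hY.integral_hasStrictDerivAt 0 t).hasDerivAt
  have hAc : Continuous A := continuous_iff_continuousAt.2 fun t => (hA t).continuousAt
  have hApow : ∀ m : ℕ, Continuous fun t => A t ^ m := by
    intro m
    induction m with
    | zero => simpa using continuous_const
    | succ m ih =>
        have : (fun t => A t ^ (m + 1)) = fun t => A t * A t ^ m := by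
          funext t; rw [pow_succ']
        rw [this]
        exact hAc.matrix_mul ih
  have hcommY : ∀ t ∈ Set.Icc (0:ℝ) b, Commute (Y t) (A t) := by
    intro t ht
    rw [hYX t ht, hAX t ht]
    exact hcomm t ht
  -- Key integral computation.
  have key : ∀ (m : ℕ), ∀ x ∈ Set.Icc (0:ℝ) b,
      (∫ t in (0:ℝ)..x, Y t * A t ^ m) = ((m : ℝ) + 1)⁻¹ • A x ^ (m + 1) := by
    intro m x hx
    have hderiv : ∀ t ∈ Set.uIcc (0:ℝ) x,
        HasDerivAt (fun u => A u ^ (m + 1)) (((m : ℝ) + 1) • (Y t * A t ^ m)) t := by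
      intro t ht
      exact matrix_hasDerivAt_pow_succ (hA t) (hcommY t (hsub x hx ht)) m
    have hcont : Continuous fun t => ((m : ℝ) + 1) • (Y t * A t ^ m) :=
      (hY.matrix_mul (hApow m)).fun_const_smul _
    have hftc := intervalIntegral.integral_eq_sub_of_hasDerivAt hderiv
      (hcont.intervalIntegrable 0 x)
    have hA0 : A 0 = 0 := intervalIntegral.integral_same
    rw [intervalIntegral.integral_smul, hA0, zero_pow (Nat.succ_ne_zero m), sub_zero] at hftc
    have hne : ((m : ℝ) + 1) ≠ 0 := by positivity
    rw [← hftc, smul_smul, inv_mul_cancel₀ hne, one_smul]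
  -- The left terms.
  have lkey : ∀ (k : ℕ), ∀ x ∈ Set.Icc (0:ℝ) b,
      lterm X k x = ((Nat.factorial k : ℝ))⁻¹ • A x ^ k := by
    intro k
    induction k with
    | zero => intro x _; simp [lterm]
    | succ k ih =>
        intro x hx
        have hcongr : (∫ t in (0:ℝ)..x, X t * lterm X k t) =
            ∫ t in (0:ℝ)..x, (Nat.factorial k : ℝ)⁻¹ • (Y t * A t ^ k) := by
          refine intervalIntegral.integral_congr fun t ht => ?_
          have ht' := hsub x hx ht
          rw [ih t ht', hYX t ht', mul_smul_comm]
        show (∫ t in (0:ℝ)..x, X t * lterm X k t) = _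
        rw [hcongr, intervalIntegral.integral_smul, key k x hx, smul_smul]
        congr 1
        rw [Nat.factorial_succ]
        push_cast
        rw [mul_inv]
        ring
  -- The right terms.
  have rkey : ∀ (k : ℕ), ∀ x ∈ Set.Icc (0:ℝ) b,
      rterm X k x = ((Nat.factorial k : ℝ))⁻¹ • A x ^ k := by
    intro k
    induction k with
    | zero => intro x _; simp [rterm]
    | succ k ih =>
        intro x hx
        have hcongr : (∫ t in (0:ℝ)..x, rterm X k t * X t) =
            ∫ t in (0:ℝ)..x, (Nat.factorial k : ℝ)⁻¹ • (Y t * A t ^ k) := by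
          refine intervalIntegral.integral_congr fun t ht => ?_
          have ht' := hsub x hx ht
          have hc : Commute (X t) (A t) := by
            rw [← hYX t ht']; exact hcommY t ht'
          rw [ih t ht', hYX t ht', smul_mul_assoc, (hc.pow_right k).eq]
        show (∫ t in (0:ℝ)..x, rterm X k t * X t) = _
        rw [hcongr, intervalIntegral.integral_smul, key k x hx, smul_smul]
        congr 1
        rw [Nat.factorial_succ]
        push_cast
        rw [mul_inv]
        ring
  intro x hx
  have hexp : NormedSpace.exp (∫ t in (0:ℝ)..x, X t) =
      ∑' k : ℕ, ((Nat.factorial k : ℝ))⁻¹ • A x ^ k := by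
    rw [NormedSpace.exp_eq_tsum ℝ, ← hAX x hx]
  constructor
  · rw [ES, hexp]
    exact tsum_congr fun k => lkey k x hx
  · rw [FS, hexp]
    exact tsum_congr fun k => rkey k x hx
end

section
/- Let A : ℝ → Matrix (Fin n) (Fin n) ℝ and F : ℝ → Matrix (Fin n) (Fin 1) ℝ be continuous on [0, b], and let C be a constant n × 1 real matrix. Then U(x) := ℰ(A)(x) · C + ℰ(A)(x) · ∫_0^x ℱ(−A)(s) · F(s) ds is differentiable on (0, b) and solves the linear system d/dx U(x) = A(x) · U(x) + F(x) with U(0) = C. -/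
open MeasureTheory Matrix

/- Matrices are equipped with the elementwise sup norm. -/
attribute [local instance] Matrix.normedAddCommGroup Matrix.normedSpace

open intervalIntegral Nat

noncomputable instance matENormedAddMonoid {ι κ : Type*} [Fintype ι] [Fintype κ] :
    ENormedAddMonoid (Matrix ι κ ℝ) := inferInstanceAs (ENormedAddMonoid (ι → κ → ℝ))

instance matPseudoMetrizableSpace {ι κ : Type*} [Fintype ι] [Fintype κ] :
    TopologicalSpace.PseudoMetrizableSpace (Matrix ι κ ℝ) :=
  inferInstanceAs (TopologicalSpace.PseudoMetrizableSpace (ι → κ → ℝ))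

section aux

variable {ι κ μ : Type*} [Fintype ι] [Fintype κ] [Fintype μ]

lemma norm_matmul_le (X : Matrix ι κ ℝ) (Y : Matrix κ μ ℝ) :
    ‖X * Y‖ ≤ (Fintype.card κ : ℝ) * ‖X‖ * ‖Y‖ := by
  rw [Matrix.norm_le_iff (by positivity)]
  intro i j
  rw [Matrix.mul_apply]
  calc ‖∑ k, X i k * Y k j‖ ≤ ∑ k, ‖X i k * Y k j‖ := norm_sum_le _ _
    _ ≤ ∑ _k : κ, ‖X‖ * ‖Y‖ := by
        refine Finset.sum_le_sum fun k _ => ?_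
        rw [norm_mul]
        exact mul_le_mul (Matrix.norm_entry_le_entrywise_sup_norm X)
          (Matrix.norm_entry_le_entrywise_sup_norm Y) (norm_nonneg _) (norm_nonneg _)
    _ = (Fintype.card κ : ℝ) * ‖X‖ * ‖Y‖ := by
        rw [Finset.sum_const, Finset.card_univ, nsmul_eq_mul]; ring

lemma isBoundedBilinearMap_matmul :
    IsBoundedBilinearMap ℝ (fun p : Matrix ι κ ℝ × Matrix κ μ ℝ => p.1 * p.2) where
  add_left := fun x₁ x₂ y => Matrix.add_mul x₁ x₂ y
  smul_left := fun c x y => Matrix.smul_mul c x y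
  add_right := fun x y₁ y₂ => Matrix.mul_add x y₁ y₂
  smul_right := fun c x y => Matrix.mul_smul x c y
  bound := ⟨(Fintype.card κ : ℝ) + 1, by positivity, fun x y => by
    calc ‖x * y‖ ≤ (Fintype.card κ : ℝ) * ‖x‖ * ‖y‖ := norm_matmul_le x y
      _ ≤ ((Fintype.card κ : ℝ) + 1) * ‖x‖ * ‖y‖ := by
          have := norm_nonneg x; have := norm_nonneg y; nlinarith⟩

lemma HasDerivAt.matmul {f : ℝ → Matrix ι κ ℝ} {g : ℝ → Matrix κ μ ℝ}
    {f' : Matrix ι κ ℝ} {g' : Matrix κ μ ℝ} {x : ℝ}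
    (hf : HasDerivAt f f' x) (hg : HasDerivAt g g' x) :
    HasDerivAt (fun y => f y * g y) (f' * g x + f x * g') x := by
  have hB := (isBoundedBilinearMap_matmul (ι := ι) (κ := κ) (μ := μ)).hasFDerivAt (f x, g x)
  have hfg := HasFDerivAt.prodMk (hf.hasFDerivAt) (hg.hasFDerivAt)
  have hcomp := hB.comp x hfg
  have := hcomp.hasDerivAt
  simp only [Function.comp_def] at this
  refine this.congr_deriv ?_
  change f x * (ContinuousLinearMap.toSpanSingleton ℝ g' 1) + (ContinuousLinearMap.toSpanSingleton ℝ f' 1) * g x = _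
  rw [ContinuousLinearMap.toSpanSingleton_apply, ContinuousLinearMap.toSpanSingleton_apply, one_smul, one_smul, add_comm]

lemma ContinuousOn.matmul {α : Type*} [TopologicalSpace α] {s : Set α}
    {f : α → Matrix ι κ ℝ} {g : α → Matrix κ μ ℝ}
    (hf : ContinuousOn f s) (hg : ContinuousOn g s) :
    ContinuousOn (fun y => f y * g y) s :=
  fun x hx => (continuous_fst.matrix_mul continuous_snd).continuousAt.comp_continuousWithinAt ((hf x hx).prodMk (hg x hx))

noncomputable def mulLeftCLM (B : Matrix ι κ ℝ) : Matrix κ μ ℝ →L[ℝ] Matrix ι μ ℝ :=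
  LinearMap.mkContinuous
    { toFun := fun Y => B * Y
      map_add' := fun Y Z => Matrix.mul_add B Y Z
      map_smul' := fun c Y => Matrix.mul_smul B c Y }
    ((Fintype.card κ : ℝ) * ‖B‖)
    (fun Y => by simpa [mul_assoc] using norm_matmul_le B Y)

noncomputable def mulRightCLM (B : Matrix κ μ ℝ) : Matrix ι κ ℝ →L[ℝ] Matrix ι μ ℝ :=
  LinearMap.mkContinuous
    { toFun := fun Y => Y * B
      map_add' := fun Y Z => Matrix.add_mul Y Z B
      map_smul' := fun c Y => Matrix.smul_mul c Y B }
    ((Fintype.card κ : ℝ) * ‖B‖)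
    (fun Y => by
      refine (norm_matmul_le Y B).trans (le_of_eq ?_)
      ring)

/-- FTC: if `f = c + ∫₀^y g` on `Icc 0 b` with `g` continuous there, then `f' = g x` inside. -/
lemma hasDerivAt_of_eq_primitive {b x : ℝ} {g f : ℝ → Matrix ι κ ℝ} {c : Matrix ι κ ℝ}
    (hg : ContinuousOn g (Set.Icc 0 b)) (hx : x ∈ Set.Ioo 0 b)
    (heq : ∀ y ∈ Set.Icc 0 b, f y = c + ∫ t in (0:ℝ)..y, g t) :
    HasDerivAt f (g x) x := by
  have hb : 0 ≤ b := (hx.1.trans hx.2).le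
  have hIoo : ContinuousOn g (Set.Ioo 0 b) := hg.mono Set.Ioo_subset_Icc_self
  have hmeas := hIoo.stronglyMeasurableAtFilter isOpen_Ioo (μ := volume)
  have hint : IntervalIntegrable g volume 0 x :=
    (hg.mono (Set.Icc_subset_Icc le_rfl hx.2.le)).intervalIntegrable_of_Icc hx.1.le
  have hca : ContinuousAt g x := hIoo.continuousAt (isOpen_Ioo.mem_nhds hx)
  have hd : HasDerivAt (fun y => ∫ t in (0:ℝ)..y, g t) (g x) x :=
    intervalIntegral.integral_hasDerivAt_right hint (hmeas x hx) hca
  have hd' : HasDerivAt (fun y => c + ∫ t in (0:ℝ)..y, g t) (g x) x := hd.const_add c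
  refine hd'.congr_of_eventuallyEq ?_
  filter_upwards [isOpen_Ioo.mem_nhds hx] with y hy
  exact heq y (Set.Ioo_subset_Icc_self hy)

end aux

section series

variable {ι : Type*} [Fintype ι] [DecidableEq ι] {b M : ℝ} {X : ℝ → Matrix ι ι ℝ}

lemma lterm_contOn (hb : 0 ≤ b) (hX : ContinuousOn X (Set.Icc 0 b)) (k : ℕ) :
    ContinuousOn (lterm X k) (Set.Icc 0 b) := by
  induction k with
  | zero => exact continuousOn_const
  | succ k ih =>
    have hg : ContinuousOn (fun t => X t * lterm X k t) (Set.Icc 0 b) := hX.matmul ih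
    have hInt : IntegrableOn (fun t => X t * lterm X k t) (Set.uIcc 0 b) := by
      rw [Set.uIcc_of_le hb]; exact hg.integrableOn_Icc
    have h2 := intervalIntegral.continuousOn_primitive_interval hInt
    rw [Set.uIcc_of_le hb] at h2
    simp only [lterm]; exact h2

lemma norm_one_matrix_le : ‖(1 : Matrix ι ι ℝ)‖ ≤ 1 := by
  rw [Matrix.norm_le_iff zero_le_one]
  intro i j
  rw [Matrix.one_apply]
  split_ifs <;> simp

lemma lterm_bound (hb : 0 ≤ b) (hX : ContinuousOn X (Set.Icc 0 b))
    (hM : ∀ t ∈ Set.Icc 0 b, ‖X t‖ ≤ M) (hM0 : 0 ≤ M) (k : ℕ) :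
    ∀ t ∈ Set.Icc 0 b, ‖lterm X k t‖ ≤ ((Fintype.card ι : ℝ) * M) ^ k * t ^ k / k ! := by
  set c : ℝ := (Fintype.card ι : ℝ) * M with hc
  have hc0 : 0 ≤ c := by positivity
  induction k with
  | zero => intro t _; simpa [lterm] using norm_one_matrix_le
  | succ k ih =>
    intro x hx
    have hx0 : 0 ≤ x := hx.1
    have hxb : x ≤ b := hx.2
    have hsub : Set.Icc (0:ℝ) x ⊆ Set.Icc 0 b := Set.Icc_subset_Icc le_rfl hxb
    have hgc : ContinuousOn (fun t => X t * lterm X k t) (Set.Icc 0 b) :=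
      hX.matmul (lterm_contOn hb hX k)
    have hgi : IntervalIntegrable (fun t => X t * lterm X k t) volume 0 x :=
      (hgc.mono hsub).intervalIntegrable_of_Icc hx0
    have hfac : (0:ℝ) < k ! := by positivity
    calc ‖lterm X (k+1) x‖ = ‖∫ t in (0:ℝ)..x, X t * lterm X k t‖ := by simp only [lterm]
      _ ≤ ∫ t in (0:ℝ)..x, ‖X t * lterm X k t‖ :=
          intervalIntegral.norm_integral_le_integral_norm hx0
      _ ≤ ∫ t in (0:ℝ)..x, c ^ (k+1) * t ^ k / k ! := by
          refine intervalIntegral.integral_mono_on hx0 hgi.norm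
            (((continuous_const.mul (continuous_pow k)).div_const _).intervalIntegrable _ _) ?_
          intro t ht
          have ht' : t ∈ Set.Icc (0:ℝ) b := hsub ht
          calc ‖X t * lterm X k t‖
              ≤ (Fintype.card ι : ℝ) * ‖X t‖ * ‖lterm X k t‖ := norm_matmul_le _ _
            _ ≤ (Fintype.card ι : ℝ) * M * (c ^ k * t ^ k / k !) := by
                have h1 := hM t ht'
                have h2 := ih t ht'
                have h3 : (0:ℝ) ≤ (Fintype.card ι : ℝ) := by positivity
                have h4 := norm_nonneg (X t)
                have h5 := norm_nonneg (lterm X k t)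
                nlinarith [mul_le_mul_of_nonneg_left h1 h3,
                  mul_le_mul_of_nonneg_left h2 (mul_nonneg h3 hM0)]
            _ = c ^ (k+1) * t ^ k / k ! := by rw [hc]; ring
      _ = c ^ (k+1) * x ^ (k+1) / (k+1)! := by
          have hrw : ∀ t : ℝ, c ^ (k+1) * t ^ k / k ! = (c ^ (k+1) / k !) * t ^ k :=
            fun t => by ring
          simp_rw [hrw]
          rw [intervalIntegral.integral_const_mul, integral_pow, Nat.factorial_succ]
          have h1 : (k ! : ℝ) ≠ 0 := ne_of_gt hfac
          have h2 : ((k:ℝ) + 1) ≠ 0 := by positivity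
          push_cast
          rw [_root_.div_mul_div_comm]
          ring

lemma lterm_norm_le (hb : 0 ≤ b) (hX : ContinuousOn X (Set.Icc 0 b))
    (hM : ∀ t ∈ Set.Icc 0 b, ‖X t‖ ≤ M) (hM0 : 0 ≤ M) (k : ℕ) :
    ∀ t ∈ Set.Icc 0 b, ‖lterm X k t‖ ≤ ((Fintype.card ι : ℝ) * M * b) ^ k / k ! := by
  intro t ht
  refine (lterm_bound hb hX hM hM0 k t ht).trans ?_
  have hc0 : (0:ℝ) ≤ (Fintype.card ι : ℝ) * M := by positivity
  have h1 : ((Fintype.card ι : ℝ) * M) ^ k * t ^ k = ((Fintype.card ι : ℝ) * M * t) ^ k :=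
    (mul_pow _ _ _).symm
  rw [h1]
  have hfac : (0:ℝ) < (k ! : ℝ) := by positivity
  have hpow : ((Fintype.card ι : ℝ) * M * t) ^ k ≤ ((Fintype.card ι : ℝ) * M * b) ^ k :=
    pow_le_pow_left₀ (mul_nonneg hc0 ht.1) (mul_le_mul_of_nonneg_left ht.2 hc0) k
  exact (div_le_div_iff_of_pos_right hfac).mpr hpow

lemma summable_lterm (hb : 0 ≤ b) (hX : ContinuousOn X (Set.Icc 0 b))
    (hM : ∀ t ∈ Set.Icc 0 b, ‖X t‖ ≤ M) (hM0 : 0 ≤ M) {t : ℝ} (ht : t ∈ Set.Icc 0 b) :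
    Summable (fun k => lterm X k t) :=
  Summable.of_norm_bounded (Real.summable_pow_div_factorial ((Fintype.card ι : ℝ) * M * b))
    (fun k => lterm_norm_le hb hX hM hM0 k t ht)

lemma ES_contOn (hb : 0 ≤ b) (hX : ContinuousOn X (Set.Icc 0 b))
    (hM : ∀ t ∈ Set.Icc 0 b, ‖X t‖ ≤ M) (hM0 : 0 ≤ M) :
    ContinuousOn (ES X) (Set.Icc 0 b) :=
  continuousOn_tsum (lterm_contOn hb hX)
    (Real.summable_pow_div_factorial ((Fintype.card ι : ℝ) * M * b))
    (fun k t ht => lterm_norm_le hb hX hM hM0 k t ht)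

lemma ES_integral_eq (hb : 0 ≤ b) (hX : ContinuousOn X (Set.Icc 0 b))
    (hM : ∀ t ∈ Set.Icc 0 b, ‖X t‖ ≤ M) (hM0 : 0 ≤ M) {x : ℝ} (hx : x ∈ Set.Icc 0 b) :
    ES X x = 1 + ∫ t in (0:ℝ)..x, X t * ES X t := by
  have hx0 : 0 ≤ x := hx.1
  have hsub : Set.Icc (0:ℝ) x ⊆ Set.Icc 0 b := Set.Icc_subset_Icc le_rfl hx.2
  set c : ℝ := (Fintype.card ι : ℝ) * M with hc
  have hc0 : 0 ≤ c := by positivity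
  set G : ℕ → ℝ → Matrix ι ι ℝ := fun k t => X t * lterm X k t with hG
  have hGc : ∀ k, ContinuousOn (G k) (Set.Icc 0 b) :=
    fun k => hX.matmul (lterm_contOn hb hX k)
  have hint : ∀ k, Integrable (G k) (volume.restrict (Set.Ioc 0 x)) := fun k =>
    (((hGc k).mono hsub).integrableOn_Icc).mono_set Set.Ioc_subset_Icc_self
  have hGle : ∀ k, ∀ t ∈ Set.Ioc (0:ℝ) x, ‖G k t‖ ≤ c * ((c*b) ^ k / k !) := by
    intro k t ht
    have ht' : t ∈ Set.Icc (0:ℝ) b := hsub (Set.Ioc_subset_Icc_self ht)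
    calc ‖G k t‖ ≤ (Fintype.card ι : ℝ) * ‖X t‖ * ‖lterm X k t‖ := norm_matmul_le _ _
      _ ≤ c * ((c*b) ^ k / k !) := by
          have h1 := hM t ht'
          have h2 := lterm_norm_le hb hX hM hM0 k t ht'
          have h3 : (0:ℝ) ≤ (Fintype.card ι : ℝ) := by positivity
          have h4 := norm_nonneg (X t)
          have h5 := norm_nonneg (lterm X k t)
          have h6 : (0:ℝ) ≤ (c*b) ^ k / k ! := by positivity
          nlinarith [mul_le_mul_of_nonneg_left h1 h3,
            mul_le_mul_of_nonneg_left h2 (mul_nonneg h3 hM0)]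
  have hnorm : Summable (fun k => ∫ t in Set.Ioc (0:ℝ) x, ‖G k t‖) := by
    refine Summable.of_nonneg_of_le (fun k => integral_nonneg fun t => norm_nonneg _)
      (fun k => ?_)
      (((Real.summable_pow_div_factorial (c*b)).mul_left c).mul_left b)
    calc ∫ t in Set.Ioc (0:ℝ) x, ‖G k t‖
        ≤ ∫ _t in Set.Ioc (0:ℝ) x, c * ((c*b) ^ k / k !) :=
          setIntegral_mono_on (hint k).norm (integrable_const _) measurableSet_Ioc (hGle k)
      _ = (volume (Set.Ioc (0:ℝ) x)).toReal * (c * ((c*b) ^ k / k !)) := by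
          rw [setIntegral_const, smul_eq_mul]; rfl
      _ ≤ b * (c * ((c*b) ^ k / k !)) := by
          have hvol : (volume (Set.Ioc (0:ℝ) x)).toReal = x := by
            simp [Real.volume_Ioc, hx0]
          rw [hvol]
          have : (0:ℝ) ≤ c * ((c*b) ^ k / k !) := by positivity
          exact mul_le_mul_of_nonneg_right hx.2 this
  have hHasSum := MeasureTheory.hasSum_integral_of_summable_integral_norm
    (μ := volume.restrict (Set.Ioc 0 x)) hint hnorm
  have hsumt : ∀ t ∈ Set.Icc (0:ℝ) b, Summable (fun k => lterm X k t) :=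
    fun t ht => summable_lterm hb hX hM hM0 ht
  have h2 : ∀ t ∈ Set.Ioc (0:ℝ) x, (∑' k, G k t) = X t * ES X t := by
    intro t ht
    exact ((hsumt t (hsub (Set.Ioc_subset_Icc_self ht))).hasSum.mapL
      (mulLeftCLM (X t))).tsum_eq
  rw [ES, Summable.tsum_eq_zero_add (hsumt x hx)]
  have h0 : lterm X 0 x = 1 := rfl
  rw [h0]
  congr 1
  have hrw : ∀ k : ℕ, lterm X (k+1) x = ∫ t in Set.Ioc (0:ℝ) x, G k t := by
    intro k
    simp only [lterm]
    rw [intervalIntegral.integral_of_le hx0]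
  calc (∑' k, lterm X (k+1) x) = ∑' k, ∫ t in Set.Ioc (0:ℝ) x, G k t := tsum_congr hrw
    _ = ∫ t in Set.Ioc (0:ℝ) x, (∑' k, G k t) := hHasSum.tsum_eq
    _ = ∫ t in Set.Ioc (0:ℝ) x, X t * ES X t :=
        setIntegral_congr_fun measurableSet_Ioc h2
    _ = ∫ t in (0:ℝ)..x, X t * ES X t := (intervalIntegral.integral_of_le hx0).symm

lemma ES_hasDerivAt (hX : ContinuousOn X (Set.Icc 0 b))
    (hM : ∀ t ∈ Set.Icc 0 b, ‖X t‖ ≤ M) (hM0 : 0 ≤ M) {x : ℝ} (hx : x ∈ Set.Ioo 0 b) :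
    HasDerivAt (ES X) (X x * ES X x) x := by
  have hb : 0 ≤ b := (hx.1.trans hx.2).le
  exact hasDerivAt_of_eq_primitive (hX.matmul (ES_contOn hb hX hM hM0)) hx
    (fun y hy => ES_integral_eq hb hX hM hM0 hy)

lemma ES_zero : ES X 0 = 1 := by
  rw [ES, tsum_eq_single 0]
  · rfl
  · intro k hk
    match k with
    | 0 => exact absurd rfl hk
    | k+1 => simp only [lterm, intervalIntegral.integral_same]

/- Right series versions -/

lemma rterm_contOn (hb : 0 ≤ b) (hX : ContinuousOn X (Set.Icc 0 b)) (k : ℕ) :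
    ContinuousOn (rterm X k) (Set.Icc 0 b) := by
  induction k with
  | zero => exact continuousOn_const
  | succ k ih =>
    have hg : ContinuousOn (fun t => rterm X k t * X t) (Set.Icc 0 b) := ih.matmul hX
    have hInt : IntegrableOn (fun t => rterm X k t * X t) (Set.uIcc 0 b) := by
      rw [Set.uIcc_of_le hb]; exact hg.integrableOn_Icc
    have h2 := intervalIntegral.continuousOn_primitive_interval hInt
    rw [Set.uIcc_of_le hb] at h2
    simp only [rterm]; exact h2

lemma rterm_bound (hb : 0 ≤ b) (hX : ContinuousOn X (Set.Icc 0 b))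
    (hM : ∀ t ∈ Set.Icc 0 b, ‖X t‖ ≤ M) (hM0 : 0 ≤ M) (k : ℕ) :
    ∀ t ∈ Set.Icc 0 b, ‖rterm X k t‖ ≤ ((Fintype.card ι : ℝ) * M) ^ k * t ^ k / k ! := by
  set c : ℝ := (Fintype.card ι : ℝ) * M with hc
  have hc0 : 0 ≤ c := by positivity
  induction k with
  | zero => intro t _; simpa [rterm] using norm_one_matrix_le
  | succ k ih =>
    intro x hx
    have hx0 : 0 ≤ x := hx.1
    have hxb : x ≤ b := hx.2
    have hsub : Set.Icc (0:ℝ) x ⊆ Set.Icc 0 b := Set.Icc_subset_Icc le_rfl hxb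
    have hgc : ContinuousOn (fun t => rterm X k t * X t) (Set.Icc 0 b) :=
      (rterm_contOn hb hX k).matmul hX
    have hgi : IntervalIntegrable (fun t => rterm X k t * X t) volume 0 x :=
      (hgc.mono hsub).intervalIntegrable_of_Icc hx0
    have hfac : (0:ℝ) < k ! := by positivity
    calc ‖rterm X (k+1) x‖ = ‖∫ t in (0:ℝ)..x, rterm X k t * X t‖ := by simp only [rterm]
      _ ≤ ∫ t in (0:ℝ)..x, ‖rterm X k t * X t‖ :=
          intervalIntegral.norm_integral_le_integral_norm hx0
      _ ≤ ∫ t in (0:ℝ)..x, c ^ (k+1) * t ^ k / k ! := by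
          refine intervalIntegral.integral_mono_on hx0 hgi.norm
            (((continuous_const.mul (continuous_pow k)).div_const _).intervalIntegrable _ _) ?_
          intro t ht
          have ht' : t ∈ Set.Icc (0:ℝ) b := hsub ht
          calc ‖rterm X k t * X t‖
              ≤ (Fintype.card ι : ℝ) * ‖rterm X k t‖ * ‖X t‖ := norm_matmul_le _ _
            _ ≤ c ^ (k+1) * t ^ k / k ! := by
                have h1 := hM t ht'
                have h2 := ih t ht'
                have h3 : (0:ℝ) ≤ (Fintype.card ι : ℝ) := by positivity
                have h4 := norm_nonneg (X t)
                have h5 := norm_nonneg (rterm X k t)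
                have h6 : (0:ℝ) ≤ c ^ k * t ^ k / k ! :=
                  div_nonneg (mul_nonneg (pow_nonneg hc0 k) (pow_nonneg ht'.1 k)) hfac.le
                have e : c ^ (k+1) * t ^ k / k ! = (c * (c ^ k * t ^ k / k !)) := by ring
                rw [e, hc]
                nlinarith [mul_le_mul_of_nonneg_left h1 h3,
                  mul_le_mul_of_nonneg_left h2 (mul_nonneg h3 hM0)]
      _ = c ^ (k+1) * x ^ (k+1) / (k+1)! := by
          have hrw : ∀ t : ℝ, c ^ (k+1) * t ^ k / k ! = (c ^ (k+1) / k !) * t ^ k :=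
            fun t => by ring
          simp_rw [hrw]
          rw [intervalIntegral.integral_const_mul, integral_pow, Nat.factorial_succ]
          have h1 : (k ! : ℝ) ≠ 0 := ne_of_gt hfac
          have h2 : ((k:ℝ) + 1) ≠ 0 := by positivity
          push_cast
          rw [_root_.div_mul_div_comm]
          ring

lemma rterm_norm_le (hb : 0 ≤ b) (hX : ContinuousOn X (Set.Icc 0 b))
    (hM : ∀ t ∈ Set.Icc 0 b, ‖X t‖ ≤ M) (hM0 : 0 ≤ M) (k : ℕ) :
    ∀ t ∈ Set.Icc 0 b, ‖rterm X k t‖ ≤ ((Fintype.card ι : ℝ) * M * b) ^ k / k ! := by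
  intro t ht
  refine (rterm_bound hb hX hM hM0 k t ht).trans ?_
  have hc0 : (0:ℝ) ≤ (Fintype.card ι : ℝ) * M := by positivity
  have h1 : ((Fintype.card ι : ℝ) * M) ^ k * t ^ k = ((Fintype.card ι : ℝ) * M * t) ^ k :=
    (mul_pow _ _ _).symm
  rw [h1]
  have hfac : (0:ℝ) < (k ! : ℝ) := by positivity
  have hpow : ((Fintype.card ι : ℝ) * M * t) ^ k ≤ ((Fintype.card ι : ℝ) * M * b) ^ k :=
    pow_le_pow_left₀ (mul_nonneg hc0 ht.1) (mul_le_mul_of_nonneg_left ht.2 hc0) k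
  exact (div_le_div_iff_of_pos_right hfac).mpr hpow

lemma summable_rterm (hb : 0 ≤ b) (hX : ContinuousOn X (Set.Icc 0 b))
    (hM : ∀ t ∈ Set.Icc 0 b, ‖X t‖ ≤ M) (hM0 : 0 ≤ M) {t : ℝ} (ht : t ∈ Set.Icc 0 b) :
    Summable (fun k => rterm X k t) :=
  Summable.of_norm_bounded (Real.summable_pow_div_factorial ((Fintype.card ι : ℝ) * M * b))
    (fun k => rterm_norm_le hb hX hM hM0 k t ht)

lemma FS_contOn (hb : 0 ≤ b) (hX : ContinuousOn X (Set.Icc 0 b))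
    (hM : ∀ t ∈ Set.Icc 0 b, ‖X t‖ ≤ M) (hM0 : 0 ≤ M) :
    ContinuousOn (FS X) (Set.Icc 0 b) :=
  continuousOn_tsum (rterm_contOn hb hX)
    (Real.summable_pow_div_factorial ((Fintype.card ι : ℝ) * M * b))
    (fun k t ht => rterm_norm_le hb hX hM hM0 k t ht)

lemma FS_integral_eq (hb : 0 ≤ b) (hX : ContinuousOn X (Set.Icc 0 b))
    (hM : ∀ t ∈ Set.Icc 0 b, ‖X t‖ ≤ M) (hM0 : 0 ≤ M) {x : ℝ} (hx : x ∈ Set.Icc 0 b) :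
    FS X x = 1 + ∫ t in (0:ℝ)..x, FS X t * X t := by
  have hx0 : 0 ≤ x := hx.1
  have hsub : Set.Icc (0:ℝ) x ⊆ Set.Icc 0 b := Set.Icc_subset_Icc le_rfl hx.2
  set c : ℝ := (Fintype.card ι : ℝ) * M with hc
  have hc0 : 0 ≤ c := by positivity
  set G : ℕ → ℝ → Matrix ι ι ℝ := fun k t => rterm X k t * X t with hG
  have hGc : ∀ k, ContinuousOn (G k) (Set.Icc 0 b) :=
    fun k => (rterm_contOn hb hX k).matmul hX
  have hint : ∀ k, Integrable (G k) (volume.restrict (Set.Ioc 0 x)) := fun k =>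
    (((hGc k).mono hsub).integrableOn_Icc).mono_set Set.Ioc_subset_Icc_self
  have hGle : ∀ k, ∀ t ∈ Set.Ioc (0:ℝ) x, ‖G k t‖ ≤ c * ((c*b) ^ k / k !) := by
    intro k t ht
    have ht' : t ∈ Set.Icc (0:ℝ) b := hsub (Set.Ioc_subset_Icc_self ht)
    calc ‖G k t‖ ≤ (Fintype.card ι : ℝ) * ‖rterm X k t‖ * ‖X t‖ := norm_matmul_le _ _
      _ ≤ c * ((c*b) ^ k / k !) := by
          have h1 := hM t ht'
          have h2 := rterm_norm_le hb hX hM hM0 k t ht'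
          have h3 : (0:ℝ) ≤ (Fintype.card ι : ℝ) := by positivity
          have h4 := norm_nonneg (X t)
          have h5 := norm_nonneg (rterm X k t)
          have h6 : (0:ℝ) ≤ (c*b) ^ k / k ! := by positivity
          nlinarith [mul_le_mul_of_nonneg_left h1 h3,
            mul_le_mul_of_nonneg_left h2 (mul_nonneg h3 hM0)]
  have hnorm : Summable (fun k => ∫ t in Set.Ioc (0:ℝ) x, ‖G k t‖) := by
    refine Summable.of_nonneg_of_le (fun k => integral_nonneg fun t => norm_nonneg _)
      (fun k => ?_)
      (((Real.summable_pow_div_factorial (c*b)).mul_left c).mul_left b)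
    calc ∫ t in Set.Ioc (0:ℝ) x, ‖G k t‖
        ≤ ∫ _t in Set.Ioc (0:ℝ) x, c * ((c*b) ^ k / k !) :=
          setIntegral_mono_on (hint k).norm (integrable_const _) measurableSet_Ioc (hGle k)
      _ = (volume (Set.Ioc (0:ℝ) x)).toReal * (c * ((c*b) ^ k / k !)) := by
          rw [setIntegral_const, smul_eq_mul]; rfl
      _ ≤ b * (c * ((c*b) ^ k / k !)) := by
          have hvol : (volume (Set.Ioc (0:ℝ) x)).toReal = x := by
            simp [Real.volume_Ioc, hx0]
          rw [hvol]
          have : (0:ℝ) ≤ c * ((c*b) ^ k / k !) := by positivity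
          exact mul_le_mul_of_nonneg_right hx.2 this
  have hHasSum := MeasureTheory.hasSum_integral_of_summable_integral_norm
    (μ := volume.restrict (Set.Ioc 0 x)) hint hnorm
  have hsumt : ∀ t ∈ Set.Icc (0:ℝ) b, Summable (fun k => rterm X k t) :=
    fun t ht => summable_rterm hb hX hM hM0 ht
  have h2 : ∀ t ∈ Set.Ioc (0:ℝ) x, (∑' k, G k t) = FS X t * X t := by
    intro t ht
    exact ((hsumt t (hsub (Set.Ioc_subset_Icc_self ht))).hasSum.mapL
      (mulRightCLM (X t))).tsum_eq
  rw [FS, Summable.tsum_eq_zero_add (hsumt x hx)]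
  have h0 : rterm X 0 x = 1 := rfl
  rw [h0]
  congr 1
  have hrw : ∀ k : ℕ, rterm X (k+1) x = ∫ t in Set.Ioc (0:ℝ) x, G k t := by
    intro k
    simp only [rterm]
    rw [intervalIntegral.integral_of_le hx0]
  calc (∑' k, rterm X (k+1) x) = ∑' k, ∫ t in Set.Ioc (0:ℝ) x, G k t := tsum_congr hrw
    _ = ∫ t in Set.Ioc (0:ℝ) x, (∑' k, G k t) := hHasSum.tsum_eq
    _ = ∫ t in Set.Ioc (0:ℝ) x, FS X t * X t :=
        setIntegral_congr_fun measurableSet_Ioc h2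
    _ = ∫ t in (0:ℝ)..x, FS X t * X t := (intervalIntegral.integral_of_le hx0).symm

lemma FS_hasDerivAt (hX : ContinuousOn X (Set.Icc 0 b))
    (hM : ∀ t ∈ Set.Icc 0 b, ‖X t‖ ≤ M) (hM0 : 0 ≤ M) {x : ℝ} (hx : x ∈ Set.Ioo 0 b) :
    HasDerivAt (FS X) (FS X x * X x) x := by
  have hb : 0 ≤ b := (hx.1.trans hx.2).le
  exact hasDerivAt_of_eq_primitive ((FS_contOn hb hX hM hM0).matmul hX) hx
    (fun y hy => FS_integral_eq hb hX hM hM0 hy)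

lemma FS_zero : FS X 0 = 1 := by
  rw [FS, tsum_eq_single 0]
  · rfl
  · intro k hk
    match k with
    | 0 => exact absurd rfl hk
    | k+1 => simp only [rterm, intervalIntegral.integral_same]

end series

/-- `U(x) = ℰ(A)(x)·C + ℰ(A)(x)·∫_0^x ℱ(−A)(s)·F(s) ds` solves
`U' = A·U + F`, `U 0 = C`. -/
theorem linear_ODE_solution {n : ℕ} (b : ℝ)
    (A : ℝ → Matrix (Fin n) (Fin n) ℝ) (F : ℝ → Matrix (Fin n) (Fin 1) ℝ)
    (C : Matrix (Fin n) (Fin 1) ℝ)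
    (hA : ContinuousOn A (Set.Icc 0 b)) (hF : ContinuousOn F (Set.Icc 0 b))
    (U : ℝ → Matrix (Fin n) (Fin 1) ℝ)
    (hU : ∀ x, U x = ES A x * C +
      ES A x * ∫ s in (0:ℝ)..x, FS (fun t => -A t) s * F s) :
    (∀ x ∈ Set.Ioo (0:ℝ) b, HasDerivAt U (A x * U x + F x) x) ∧ U 0 = C := by
  constructor
  · intro x hx
    have hb : 0 ≤ b := (hx.1.trans hx.2).le
    obtain ⟨M0, hM0⟩ := isCompact_Icc.exists_bound_of_continuousOn hA
    set M : ℝ := max M0 0 with hMdef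
    have hMnn : 0 ≤ M := le_max_right _ _
    have hMA : ∀ t ∈ Set.Icc (0:ℝ) b, ‖A t‖ ≤ M := fun t ht => (hM0 t ht).trans (le_max_left _ _)
    set N : ℝ → Matrix (Fin n) (Fin n) ℝ := fun t => -A t with hNdef
    have hN : ContinuousOn N (Set.Icc 0 b) := hA.neg
    have hMN : ∀ t ∈ Set.Icc (0:ℝ) b, ‖N t‖ ≤ M := fun t ht => by
      rw [hNdef]; simpa [norm_neg] using hMA t ht
    set E : ℝ → Matrix (Fin n) (Fin n) ℝ := ES A with hEdef
    set Fs : ℝ → Matrix (Fin n) (Fin n) ℝ := FS N with hFsdef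
    set W : ℝ → Matrix (Fin n) (Fin 1) ℝ := fun y => ∫ s in (0:ℝ)..y, Fs s * F s with hWdef
    have hEcont : ContinuousOn E (Set.Icc 0 b) := ES_contOn hb hA hMA hMnn
    have hFscont : ContinuousOn Fs (Set.Icc 0 b) := FS_contOn hb hN hMN hMnn
    have hE' : HasDerivAt E (A x * E x) x := ES_hasDerivAt hA hMA hMnn hx
    have hFs' : HasDerivAt Fs (Fs x * N x) x := FS_hasDerivAt hN hMN hMnn hx
    have hW' : HasDerivAt W (Fs x * F x) x := by
      refine hasDerivAt_of_eq_primitive (c := 0) (hFscont.matmul hF) hx (fun y hy => ?_)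
      rw [zero_add]
    -- FS(-A) x * ES A x = 1
    have hinv : Fs x * E x = 1 := by
      set H : ℝ → Matrix (Fin n) (Fin n) ℝ := fun y => Fs y * E y with hHdef
      have hHcont : ContinuousOn H (Set.Icc 0 b) := hFscont.matmul hEcont
      have hH0 : H 0 = 1 := by
        rw [hHdef]
        simp only
        rw [hFsdef, hEdef, FS_zero, ES_zero, one_mul]
      have hHderiv : ∀ y ∈ Set.Ioo (0:ℝ) b, HasDerivAt H 0 y := by
        intro y hy
        have h1 : HasDerivAt E (A y * E y) y := ES_hasDerivAt hA hMA hMnn hy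
        have h2 : HasDerivAt Fs (Fs y * N y) y := FS_hasDerivAt hN hMN hMnn hy
        have h3 := h2.matmul h1
        have h4 : Fs y * N y * E y + Fs y * (A y * E y) = 0 := by
          rw [hNdef]
          simp only [Matrix.mul_assoc, Matrix.neg_mul, Matrix.mul_neg]
          exact neg_add_cancel _
        rwa [h4] at h3
      have hkey : ∀ ε ∈ Set.Ioc (0:ℝ) x, H x = H ε := by
        intro ε hε
        have hsub : Set.Icc ε x ⊆ Set.Icc 0 b := Set.Icc_subset_Icc hε.1.le hx.2.le
        refine constant_of_has_deriv_right_zero (hHcont.mono hsub) (fun y hy => ?_) x ?_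
        · exact ((hHderiv y ⟨lt_of_lt_of_le hε.1 hy.1, lt_trans hy.2 hx.2⟩).hasDerivWithinAt)
        · exact ⟨hε.2, le_rfl⟩
      have hne : (nhdsWithin (0:ℝ) (Set.Ioc 0 x)).NeBot := by
        refine mem_closure_iff_nhdsWithin_neBot.mp ?_
        rw [closure_Ioc hx.1.ne]
        exact ⟨le_rfl, hx.1.le⟩
      have h1 : Filter.Tendsto H (nhdsWithin (0:ℝ) (Set.Ioc 0 x)) (nhds (H 0)) := by
        have := hHcont 0 ⟨le_rfl, hb⟩
        exact this.mono_left (nhdsWithin_mono 0 (fun t ht => ⟨ht.1.le, ht.2.trans hx.2.le⟩))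
      have h2 : Filter.Tendsto H (nhdsWithin (0:ℝ) (Set.Ioc 0 x)) (nhds (H x)) := by
        refine Filter.Tendsto.congr' ?_ tendsto_const_nhds
        filter_upwards [self_mem_nhdsWithin] with ε hε
        exact hkey ε hε
      have huniq : H 0 = H x := tendsto_nhds_unique h1 h2
      show H x = 1
      rw [← huniq, hH0]
    have heinv : E x * Fs x = 1 := mul_eq_one_comm.mpr hinv
    have hd1 : HasDerivAt (fun y => E y * C) (A x * E x * C) x := by
      have := hE'.matmul (hasDerivAt_const (𝕜 := ℝ) x C)
      simpa using this
    have hd2 : HasDerivAt (fun y => E y * W y)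
        (A x * E x * W x + E x * (Fs x * F x)) x := hE'.matmul hW'
    have hd := hd1.add hd2
    have hUfun : U = fun y => E y * C + E y * W y := funext fun y => hU y
    rw [hUfun]
    have hgoal : A x * E x * C + (A x * E x * W x + E x * (Fs x * F x))
        = A x * (E x * C + E x * W x) + F x := by
      rw [← Matrix.mul_assoc (E x) (Fs x) (F x), heinv, Matrix.one_mul]
      rw [Matrix.mul_add]
      rw [Matrix.mul_assoc, Matrix.mul_assoc]
      abel
    show HasDerivAt (fun y => E y * C + E y * W y) (A x * (E x * C + E x * W x) + F x) x
    rw [← hgoal]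
    exact hd
  · rw [hU 0, ES_zero, intervalIntegral.integral_same]
    simp
end
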